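/- Define a binary partial operation merge on a type of behaviour trees: merge is idempotent (merge B B = B), commutative where defined, and for branching terms, merge of p&{l_i : B_i}_{i∈I} and p&{l_j : B'_j}_{j∈J} is p&{l_k : C_k}_{k∈I∪J} where C_k = merge B_k B'_k for k ∈ I ∩ J, C_k = B_k for k ∈ I \ J, and C_k = B'_k for k ∈ J \ I. Prove that merge, so defined on finitely-branching labelled trees with label-indexed branching nodes, is associative where defined: if merge (merge A B) C is defined then merge A (merge B C) is defined and they are equal. -/

import Mathlib

/-- Behaviour trees: non-branching constructor nodes with a list of children,
and branching nodes carrying a (label-indexed) map from labels to subtrees. -/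
inductive BT (C L : Type) where
  | node : C → List (BT C L) → BT C L
  | branch : (L → Option (BT C L)) → BT C L

theorem BT.myInd {C L : Type} {P : BT C L → Prop}
    (hn : ∀ c ts, (∀ t ∈ ts, P t) → P (.node c ts))
    (hb : ∀ f, (∀ l t, f l = some t → P t) → P (.branch f)) :
    ∀ b, P b := by
  intro b
  refine BT.rec (motive_1 := P) (motive_2 := fun ts => ∀ t ∈ ts, P t)
    (motive_3 := fun o => ∀ t, o = some t → P t) ?_ ?_ ?_ ?_ ?_ ?_ b
  · exact hn
  · intro f ih; exact hb f (fun l t h => ih l t h)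
  · simp
  · intro h ts ph pts t ht
    rcases List.mem_cons.1 ht with rfl | ht
    · exact ph
    · exact pts t ht
  · simp
  · intro v pv t h; cases h; exact pv

open Classical in
theorem merge_idem_comm_assoc {C L : Type}
    (merge : BT C L → BT C L → Option (BT C L))
    (h_node : ∀ (c c' : C) (ts ts' : List (BT C L)) (r : BT C L),
      merge (.node c ts) (.node c' ts') = some r ↔
        (c = c' ∧ ∃ us : List (BT C L), r = .node c us ∧
          us.length = ts.length ∧ ts'.length = ts.length ∧
          ∀ (i : ℕ) (h1 : i < ts.length) (h2 : i < ts'.length) (h3 : i < us.length),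
            merge (ts.get ⟨i, h1⟩) (ts'.get ⟨i, h2⟩) = some (us.get ⟨i, h3⟩)))
    (h_mixed : ∀ (c : C) (ts : List (BT C L)) (f : L → Option (BT C L)),
      merge (.node c ts) (.branch f) = none ∧ merge (.branch f) (.node c ts) = none)
    (h_branch : ∀ f g : L → Option (BT C L),
      merge (.branch f) (.branch g) =
        if ∀ (l : L) (a b : BT C L), f l = some a → g l = some b → (merge a b).isSome = true
        then some (.branch (fun l =>
          match f l, g l with
          | some a, some b => merge a b
          | some a, none => some a
          | none, some b => some b
          | none, none => none))
        else none) :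
    (∀ B : BT C L, merge B B = some B) ∧
    (∀ A B r : BT C L, merge A B = some r → merge B A = some r) ∧
    (∀ A B C' ab r : BT C L, merge A B = some ab → merge ab C' = some r →
      ∃ bc : BT C L, merge B C' = some bc ∧ merge A bc = some r) := by
  have hidem : ∀ B : BT C L, merge B B = some B := by
    intro B
    induction B using BT.myInd with
    | hn c ts ih =>
      rw [h_node]
      refine ⟨rfl, ts, rfl, rfl, rfl, ?_⟩
      intro i h1 h2 h3
      exact ih _ (List.get_mem ts ⟨i, h1⟩)
    | hb f ih =>
      rw [h_branch, if_pos]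
      · congr 1; congr 1; funext l
        cases hf : f l with
        | none => simp
        | some a => simp [ih l a hf]
      · intro l a b ha hb'
        rw [ha] at hb'; cases hb'
        simp [ih l a ha]
  have hcomm : ∀ A B r : BT C L, merge A B = some r → merge B A = some r := by
    intro A
    induction A using BT.myInd with
    | hn c ts ih =>
      intro B r h
      cases B with
      | node c' ts' =>
        rw [h_node] at h
        obtain ⟨rfl, us, rfl, hlu, hl', hpt⟩ := h
        rw [h_node]
        refine ⟨rfl, us, rfl, by omega, by omega, ?_⟩
        intro i h1 h2 h3
        exact ih _ (List.get_mem ts ⟨i, h2⟩) _ _ (hpt i h2 h1 h3)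
      | branch f => simp [(h_mixed c ts f).1] at h
    | hb f ih =>
      intro B r h
      cases B with
      | node c ts => simp [(h_mixed c ts f).2] at h
      | branch g =>
        rw [h_branch] at h
        split_ifs at h with hc
        · obtain rfl := Option.some.inj h
          rw [h_branch, if_pos]
          · congr 1; congr 1; funext l
            cases hf : f l with
            | none => cases hg : g l <;> simp
            | some a =>
              cases hg : g l with
              | none => simp
              | some b =>
                simp only
                have := hc l a b hf hg
                obtain ⟨x, hx⟩ := Option.isSome_iff_exists.1 this
                rw [hx]
                exact ih l a hf b x hx
          · intro l b a hg hf
            have := hc l a b hf hg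
            obtain ⟨x, hx⟩ := Option.isSome_iff_exists.1 this
            simp [ih l a hf b x hx]
  refine ⟨hidem, hcomm, ?_⟩
  intro A
  induction A using BT.myInd with
  | hn cA tsA ih =>
    intro B C' ab r h1 h2
    cases B with
    | branch f => simp [(h_mixed cA tsA f).1] at h1
    | node cB tsB =>
      rw [h_node] at h1
      obtain ⟨rfl, us, rfl, hlu, hlB, hp1⟩ := h1
      cases C' with
      | branch f => simp [(h_mixed cA us f).1] at h2
      | node cC tsC =>
        rw [h_node] at h2
        obtain ⟨rfl, vs, rfl, hlv, hlC, hp2⟩ := h2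
        have H : ∀ i : Fin tsA.length,
            ∃ bc, merge (tsB.get ⟨i, by omega⟩) (tsC.get ⟨i, by omega⟩) = some bc ∧
              merge (tsA.get i) bc = some (vs.get ⟨i, by omega⟩) := by
          intro i
          exact ih _ (List.get_mem tsA i) _ _ _ _
            (hp1 i i.2 (by omega) (by omega))
            (hp2 i (by omega) (by omega) (by omega))
        set ws : List (BT C L) := List.ofFn (fun i : Fin tsA.length => (H i).choose) with hws
        have hwlen : ws.length = tsA.length := by simp [hws]
        have hwget : ∀ (i : ℕ) (h : i < tsA.length),
            ws.get ⟨i, by omega⟩ = (H ⟨i, h⟩).choose := by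
          intro i h
          simp [hws, List.get_ofFn]
        refine ⟨.node cA ws, ?_, ?_⟩
        · rw [h_node]
          refine ⟨rfl, ws, rfl, by omega, by omega, ?_⟩
          intro i h1' h2' h3'
          have hi : i < tsA.length := by omega
          rw [hwget i hi]
          exact (H ⟨i, hi⟩).choose_spec.1
        · rw [h_node]
          refine ⟨rfl, vs, rfl, by omega, by omega, ?_⟩
          intro i h1' h2' h3'
          rw [hwget i h1']
          exact (H ⟨i, h1'⟩).choose_spec.2
  | hb f ih =>
    intro B C' ab r h1 h2
    cases B with
    | node c ts => simp [(h_mixed c ts f).2] at h1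
    | branch g =>
      rw [h_branch] at h1
      split_ifs at h1 with c1
      obtain rfl := Option.some.inj h1
      cases C' with
      | node c ts => simp [(h_mixed c ts _).2] at h2
      | branch hh =>
        rw [h_branch] at h2
        split_ifs at h2 with c2
        obtain rfl := Option.some.inj h2
        -- condition for merging g and hh
        have c3 : ∀ (l : L) (b c : BT C L), g l = some b → hh l = some c →
            (merge b c).isSome = true := by
          intro l b c hg hhl
          cases hf : f l with
          | none =>
            have := c2 l b c (by simp [hf, hg]) hhl
            exact this
          | some a =>
            obtain ⟨ab', hab'⟩ := Option.isSome_iff_exists.1 (c1 l a b hf hg)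
            obtain ⟨r', hr'⟩ := Option.isSome_iff_exists.1
              (c2 l ab' c (by simp [hf, hg, hab']) hhl)
            obtain ⟨bc', hbc', _⟩ := ih l a hf b c ab' r' hab' hr'
            simp [hbc']
        have c4 : ∀ (l : L) (a x : BT C L), f l = some a →
            (match g l, hh l with
              | some b, some c => merge b c
              | some b, none => some b
              | none, some c => some c
              | none, none => none) = some x →
            (merge a x).isSome = true := by
          intro l a x hf hx
          cases hg : g l with
          | some b =>
            cases hhl : hh l with
            | some c =>
              simp only [hg, hhl] at hx
              obtain ⟨ab', hab'⟩ := Option.isSome_iff_exists.1 (c1 l a b hf hg)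
              obtain ⟨r', hr'⟩ := Option.isSome_iff_exists.1
                (c2 l ab' c (by simp [hf, hg, hab']) hhl)
              obtain ⟨bc', hbc', har⟩ := ih l a hf b c ab' r' hab' hr'
              rw [hbc'] at hx
              cases Option.some.inj hx
              simp [har]
            | none =>
              simp only [hg, hhl] at hx
              cases Option.some.inj hx
              exact c1 l a x hf hg
          | none =>
            cases hhl : hh l with
            | some c =>
              simp only [hg, hhl] at hx
              cases Option.some.inj hx
              exact c2 l a x (by simp [hf, hg]) hhl
            | none => simp [hg, hhl] at hx
        refine ⟨.branch (fun l =>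
          match g l, hh l with
          | some b, some c => merge b c
          | some b, none => some b
          | none, some c => some c
          | none, none => none), ?_, ?_⟩
        · rw [h_branch, if_pos c3]
        · rw [h_branch, if_pos]
          · congr 1; congr 1; funext l
            cases hf : f l with
            | some a =>
              cases hg : g l with
              | some b =>
                cases hhl : hh l with
                | some c =>
                  simp only [hf, hg, hhl]
                  obtain ⟨ab', hab'⟩ := Option.isSome_iff_exists.1 (c1 l a b hf hg)
                  obtain ⟨r', hr'⟩ := Option.isSome_iff_exists.1
                    (c2 l ab' c (by simp [hf, hg, hab']) hhl)
                  obtain ⟨bc', hbc', har⟩ := ih l a hf b c ab' r' hab' hr'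
                  rw [hab', hbc']
                  simp [har, hr']
                | none =>
                  obtain ⟨ab', hab'⟩ := Option.isSome_iff_exists.1 (c1 l a b hf hg)
                  simp [hf, hg, hhl, hab']
              | none =>
                cases hhl : hh l with
                | some c => simp [hf, hg, hhl]
                | none => simp [hf, hg, hhl]
            | none =>
              cases hg : g l with
              | some b =>
                cases hhl : hh l with
                | some c =>
                  simp only [hf, hg, hhl]
                  obtain ⟨bc', hbc'⟩ := Option.isSome_iff_exists.1 (c3 l b c hg hhl)
                  simp [hbc']
                | none => simp [hf, hg, hhl]
              | none =>
                cases hhl : hh l with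
                | some c => simp [hf, hg, hhl]
                | none => simp [hf, hg, hhl]
          · intro l a x hf hx
            exact c4 l a x hf hx
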